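/- arXiv:2103.08868 — 3 statements merged into one kernel-verified Lean document; each statement's English description precedes it below -/
import Mathlib

section
/- For M = [0,R] and σ a finite nonempty subset of ℝ^d × [0,R], define κ_C(σ) = inf over w ∈ ℝ^d of max over (x,r) ∈ σ of (‖x − w‖ − r)⁺. Then κ_C(σ) ≤ t if and only if the closed balls {B̄_{t+r}(x) : (x,r) ∈ σ} have nonempty common intersection. -/
set_option maxHeartbeats 800000


noncomputable instance (priority := low) {α : Type*} : DecidableEq α := Classical.decEq α

/-- The Čech filtration function for balls with initial radii:
`κ_C(σ) = inf_w max_{(x,r) ∈ σ} (‖x - w‖ - r)⁺`. -/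
noncomputable def kappaC {d : ℕ} (σ : Finset (EuclideanSpace ℝ (Fin d) × ℝ))
    (hσ : σ.Nonempty) : ℝ :=
  ⨅ w : EuclideanSpace ℝ (Fin d), σ.sup' hσ (fun p => max (‖p.1 - w‖ - p.2) 0)

/-- `κ_C(σ) ≤ t` iff the closed balls `B̄_{t+r}(x)`, `(x,r) ∈ σ`,
have a common point. -/
theorem kappaC_le_iff {d : ℕ} (R : ℝ) (hR : 0 < R)
    (σ : Finset (EuclideanSpace ℝ (Fin d) × ℝ)) (hσ : σ.Nonempty)
    (hmarks : ∀ p ∈ σ, p.2 ∈ Set.Icc (0 : ℝ) R)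
    (t : ℝ) (ht : 0 ≤ t) :
    kappaC σ hσ ≤ t ↔
      (⋂ p ∈ σ, Metric.closedBall (p.1 : EuclideanSpace ℝ (Fin d)) (t + p.2)).Nonempty := by
  unfold kappaC
  constructor
  · intro h
    -- nested compact sets
    set V : ℕ → Set (EuclideanSpace ℝ (Fin d)) := fun n =>
      ⋂ p ∈ σ, Metric.closedBall p.1 (t + 1 / (n + 1) + p.2) with hV
    have hVmem : ∀ n (w : EuclideanSpace ℝ (Fin d)),
        w ∈ V n ↔ ∀ p ∈ σ, ‖p.1 - w‖ ≤ t + 1 / (n + 1) + p.2 := by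
      intro n w
      simp [hV, Metric.mem_closedBall, dist_eq_norm, norm_sub_rev]
    have hVne : ∀ n, (V n).Nonempty := by
      intro n
      have hpos : (0:ℝ) < 1 / (n + 1) := by positivity
      have hlt : kappaC σ hσ < t + 1 / (n + 1) := lt_of_le_of_lt h (by linarith)
      obtain ⟨w, hw⟩ := exists_lt_of_ciInf_lt hlt
      rw [Finset.sup'_lt_iff] at hw
      refine ⟨w, (hVmem n w).mpr fun p hp => ?_⟩
      have h2 : ‖p.1 - w‖ - p.2 ≤ max (‖p.1 - w‖ - p.2) 0 := le_max_left _ _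
      have := hw p hp
      linarith
    have hVclosed : ∀ n, IsClosed (V n) := fun n =>
      isClosed_biInter fun p _ => Metric.isClosed_closedBall
    obtain ⟨p₀, hp₀⟩ := hσ
    have hVcompact : ∀ n, IsCompact (V n) := by
      intro n
      refine (isCompact_closedBall p₀.1 (t + 1 / (n + 1) + p₀.2)).of_isClosed_subset
        (hVclosed n) ?_
      intro w hw
      have := (hVmem n w).mp hw p₀ hp₀
      rw [Metric.mem_closedBall, dist_eq_norm, norm_sub_rev]
      exact this
    have hVmono : ∀ n, V (n + 1) ⊆ V n := by
      intro n w hw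
      rw [hVmem] at hw ⊢
      intro p hp
      have h1 : (1:ℝ) / ((n:ℝ) + 1 + 1) ≤ 1 / ((n:ℝ) + 1) := by
        apply one_div_le_one_div_of_le (by positivity) (by linarith)
      have := hw p hp
      push_cast at this ⊢
      linarith
    obtain ⟨w, hw⟩ := IsCompact.nonempty_iInter_of_sequence_nonempty_isCompact_isClosed
      V hVmono hVne (hVcompact 0) hVclosed
    refine ⟨w, ?_⟩
    simp only [Set.mem_iInter, Metric.mem_closedBall]
    intro p hp
    rw [dist_eq_norm, norm_sub_rev]
    refine le_of_forall_pos_le_add fun ε hε => ?_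
    obtain ⟨n, hn⟩ := exists_nat_one_div_lt hε
    have hwn : w ∈ V n := Set.mem_iInter.mp hw n
    have := (hVmem n w).mp hwn p hp
    linarith
  · rintro ⟨w, hw⟩
    simp only [Set.mem_iInter, Metric.mem_closedBall] at hw
    have hb : BddBelow (Set.range fun w : EuclideanSpace ℝ (Fin d) =>
        σ.sup' hσ (fun p => max (‖p.1 - w‖ - p.2) 0)) := by
      refine ⟨0, ?_⟩
      rintro x ⟨v, rfl⟩
      obtain ⟨p₀, hp₀⟩ := id hσ
      rw [Finset.le_sup'_iff]
      exact ⟨p₀, hp₀, le_max_right _ 0⟩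
    refine le_trans (ciInf_le hb w) ?_
    rw [Finset.sup'_le_iff]
    intro p hp
    have := hw p hp
    rw [dist_eq_norm, norm_sub_rev] at this
    exact max_le (by linarith) ht
end

section
/- Let {A_n}_{n∈ℕ} be a convex averaging sequence in ℝ^d, i.e., each A_n is a bounded convex Borel set, A_n ⊆ A_{n+1}, and r(A_n) → ∞ where r(A) = sup{r > 0 : A contains a ball of radius r}. Then for any fixed M > 0, ℓ(underline{A_n}^{(M)})/ℓ(A_n) → 1 as n → ∞, where underline{A}^{(M)} is the union of the lattice cubes Λ_M + z (z ∈ Mℤ^d) entirely contained in A. -/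
open scoped Pointwise ENNReal
open MeasureTheory Filter

/-- The union of the lattice cubes `Λ_M + z`, `z ∈ Mℤ^d`, entirely contained
in `A`, where `Λ_M = [−M/2, M/2)^d`. -/
def underlineCubes {d : ℕ} (M : ℝ) (A : Set (Fin d → ℝ)) : Set (Fin d → ℝ) :=
  ⋃ z ∈ {z : Fin d → ℤ |
      ((fun i => M * (z i : ℝ)) +ᵥ (Set.univ.pi fun _ => Set.Ico (-(M / 2)) (M / 2))) ⊆ A},
    ((fun i => M * (z i : ℝ)) +ᵥ (Set.univ.pi fun _ => Set.Ico (-(M / 2)) (M / 2)))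

private def cube {d : ℕ} (M : ℝ) (z : Fin d → ℤ) : Set (Fin d → ℝ) :=
  (fun i => M * (z i : ℝ)) +ᵥ (Set.univ.pi fun _ => Set.Ico (-(M / 2)) (M / 2))

private lemma mem_cube_iff {d : ℕ} {M : ℝ} {z : Fin d → ℤ} {y : Fin d → ℝ} :
    y ∈ cube M z ↔ ∀ i, y i - M * z i ∈ Set.Ico (-(M/2)) (M/2) := by
  rw [cube, Set.mem_vadd_set_iff_neg_vadd_mem]
  simp only [Set.mem_pi, Set.mem_univ, forall_true_left]
  constructor <;> intro h i <;> have := h i <;>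
  · rw [show -(fun i => M * (z i : ℝ)) +ᵥ y = fun i => y i - M * z i from
      funext fun i => by simp [neg_add_eq_sub]] at *
    try exact this
    try assumption

private lemma exists_mem_cube {d : ℕ} {M : ℝ} (hM : 0 < M) (y : Fin d → ℝ) :
    ∃ z : Fin d → ℤ, y ∈ cube M z := by
  refine ⟨fun i => ⌊y i / M + 1/2⌋, mem_cube_iff.2 fun i => ?_⟩
  have h1 : (⌊y i / M + 1/2⌋ : ℝ) ≤ y i / M + 1/2 := Int.floor_le _
  have h2 : y i / M + 1/2 < ⌊y i / M + 1/2⌋ + 1 := Int.lt_floor_add_one _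
  constructor
  · have := mul_le_mul_of_nonneg_left h1 hM.le
    rw [mul_add] at this
    have hy : M * (y i / M) = y i := by field_simp
    rw [hy] at this
    nlinarith
  · have := mul_lt_mul_of_pos_left h2 hM
    rw [mul_add] at this
    have hy : M * (y i / M) = y i := by field_simp
    rw [hy] at this
    nlinarith

private lemma cube_subset_ball {d : ℕ} {M : ℝ} (hM : 0 < M) {z : Fin d → ℤ}
    {y : Fin d → ℝ} (hy : y ∈ cube M z) : cube M z ⊆ Metric.ball y M := by
  intro w hw
  rw [Metric.mem_ball, dist_pi_lt_iff hM]
  intro i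
  have h1 := mem_cube_iff.1 hy i
  have h2 := mem_cube_iff.1 hw i
  simp only [Set.mem_Ico] at h1 h2
  rw [Real.dist_eq, abs_sub_lt_iff]
  constructor <;> linarith

private lemma mem_underline_of_ball {d : ℕ} {M : ℝ} (hM : 0 < M)
    {A : Set (Fin d → ℝ)} {y : Fin d → ℝ} (h : Metric.ball y M ⊆ A) :
    y ∈ underlineCubes M A := by
  obtain ⟨z, hy⟩ := exists_mem_cube hM y
  exact Set.mem_biUnion (show cube M z ⊆ A from (cube_subset_ball hM hy).trans h) hy

private lemma underline_subset {d : ℕ} {M : ℝ} {A : Set (Fin d → ℝ)} :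
    underlineCubes M A ⊆ A :=
  Set.iUnion₂_subset fun _ hz => hz

private lemma ball_shrink_subset {d : ℕ} {M : ℝ} {A : Set (Fin d → ℝ)}
    (hA : Convex ℝ A) {x : Fin d → ℝ} {r : ℝ} (hball : Metric.ball x r ⊆ A)
    (hM : 0 < M) (hMr : M < r) {a : Fin d → ℝ} (ha : a ∈ A) :
    Metric.ball (x + (1 - M/r) • (a - x)) M ⊆ A := by
  have hr : 0 < r := hM.trans hMr
  set t := M / r with ht
  have ht0 : 0 < t := div_pos hM hr
  have ht1 : t < 1 := (div_lt_one hr).2 hMr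
  intro w hw
  set y := x + (1 - t) • (a - x) with hy
  have hwy : ‖w - y‖ < M := by rw [← dist_eq_norm]; exact hw
  have hu : x + (r/M) • (w - y) ∈ A := by
    apply hball
    rw [Metric.mem_ball, dist_eq_norm, add_sub_cancel_left, norm_smul]
    have : ‖(r/M : ℝ)‖ = r / M := by
      rw [Real.norm_eq_abs, abs_of_pos (div_pos hr hM)]
    rw [this]
    calc r / M * ‖w - y‖ < r / M * M := by
          exact mul_lt_mul_of_pos_left hwy (div_pos hr hM)
      _ = r := by field_simp
  have key : (1 - t) • a + t • (x + (r/M) • (w - y)) = w := by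
    have h1 : t * (r/M) = 1 := by rw [ht]; field_simp
    rw [smul_add, smul_smul, h1, one_smul, hy]
    module
  have := hA ha hu (a := 1 - t) (b := t) (by linarith) ht0.le (by ring)
  rwa [key] at this

/-- along a convex averaging sequence `{A_n}`, the union of lattice
cubes contained in `A_n` fills up `A_n` in the sense of Lebesgue measure:
`ℓ(underline{A_n}^{(M)}) / ℓ(A_n) → 1`. -/
theorem volume_ratio_underline_tendsto_one {d : ℕ} (hd : 0 < d)
    (A : ℕ → Set (Fin d → ℝ))
    (hbdd : ∀ n, Bornology.IsBounded (A n))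
    (hconv : ∀ n, Convex ℝ (A n))
    (hmeas : ∀ n, MeasurableSet (A n))
    (hmono : ∀ n, A n ⊆ A (n + 1))
    (hinr : ∀ r : ℝ, 0 < r → ∃ N : ℕ, ∀ n ≥ N, ∃ x, Metric.ball x r ⊆ A n)
    (M : ℝ) (hM : 0 < M) :
    Tendsto (fun n => (volume (underlineCubes M (A n))).toReal / (volume (A n)).toReal)
      atTop (nhds 1) := by
  rw [Metric.tendsto_atTop]
  intro ε hε
  set r : ℝ := max (M + 1) (d * M / ε + 1) with hrdef
  have hrM : M < r := lt_of_lt_of_le (by linarith) (le_max_left _ _)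
  have hr0 : 0 < r := hM.trans hrM
  have hrε : (d : ℝ) * M / r < ε := by
    have h1 : (d : ℝ) * M / ε < r := lt_of_lt_of_le (by linarith) (le_max_right _ _)
    rw [div_lt_iff₀ hr0]
    rw [div_lt_iff₀ hε] at h1
    nlinarith
  obtain ⟨N, hN⟩ := hinr r hr0
  refine ⟨N, fun n hn => ?_⟩
  obtain ⟨x, hball⟩ := hN n hn
  set t := M / r with htdef
  have ht0 : 0 < t := div_pos hM hr0
  have ht1 : t < 1 := (div_lt_one hr0).2 hrM
  set S : Set (Fin d → ℝ) := x +ᵥ ((1 - t) • ((-x) +ᵥ A n)) with hSdef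
  have hSsub : S ⊆ underlineCubes M (A n) := by
    rintro s hs
    rw [Set.mem_vadd_set] at hs
    obtain ⟨b, hb, rfl⟩ := hs
    rw [Set.mem_smul_set] at hb
    obtain ⟨c, hc, rfl⟩ := hb
    rw [Set.mem_vadd_set] at hc
    obtain ⟨a, ha, rfl⟩ := hc
    have hbs : Metric.ball (x + (1 - t) • (a - x)) M ⊆ A n :=
      ball_shrink_subset (hconv n) hball hM hrM ha
    have heq : x +ᵥ (1 - t) • (-x +ᵥ a) = x + (1 - t) • (a - x) := by
      simp [vadd_eq_add, neg_add_eq_sub]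
    rw [heq]
    exact mem_underline_of_ball hM hbs
  have hvolS : volume S = ENNReal.ofReal ((1 - t) ^ d) * volume (A n) := by
    rw [hSdef, measure_vadd, Measure.addHaar_smul, measure_vadd]
    congr 2
    rw [Module.finrank_fin_fun, abs_of_nonneg (pow_nonneg (by linarith) d)]
  have hAfin : volume (A n) < ⊤ := (hbdd n).measure_lt_top
  have hApos : 0 < volume (A n) :=
    lt_of_lt_of_le (Metric.measure_ball_pos volume x hr0) (measure_mono hball)
  have hUle : volume (underlineCubes M (A n)) ≤ volume (A n) :=
    measure_mono underline_subset
  have hUfin : volume (underlineCubes M (A n)) ≠ ⊤ := (lt_of_le_of_lt hUle hAfin).ne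
  have hlow : ENNReal.ofReal ((1 - t) ^ d) * volume (A n)
      ≤ volume (underlineCubes M (A n)) := hvolS ▸ measure_mono hSsub
  set vA := (volume (A n)).toReal with hvAdef
  set vU := (volume (underlineCubes M (A n))).toReal with hvUdef
  have hvA : 0 < vA := ENNReal.toReal_pos hApos.ne' hAfin.ne
  have h1 : vU ≤ vA := ENNReal.toReal_mono hAfin.ne hUle
  have h2 : (1 - t) ^ d * vA ≤ vU := by
    have h := ENNReal.toReal_mono hUfin hlow
    rwa [ENNReal.toReal_mul, ENNReal.toReal_ofReal (pow_nonneg (by linarith) d)] at h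
  have hratio_le : vU / vA ≤ 1 := (div_le_one hvA).2 h1
  have hratio_ge : (1 - t) ^ d ≤ vU / vA := (le_div_iff₀ hvA).2 h2
  have hbern : 1 - (d : ℝ) * t ≤ (1 - t) ^ d := by
    have h := one_add_mul_le_pow (a := -t) (by linarith) d
    simpa [sub_eq_add_neg, mul_neg] using h
  have hdt : (d : ℝ) * t < ε := by
    rw [htdef, ← mul_div_assoc]
    exact hrε
  rw [Real.dist_eq, abs_lt]
  constructor <;> linarith
end

section
/- Let {A_n} be a convex averaging sequence in ℝ^d (bounded convex sets, increasing, inradius tending to infinity). Then for every fixed h > 0, ℓ(∂A_n^h)/ℓ(A_n) → 0 as n → ∞, where ∂A^h = {x ∈ ℝ^d : dist(x, ∂A) ≤ h} is the h-neighborhood of the topological boundary of A. -/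
open MeasureTheory Filter Metric Set

private lemma key_bound {d : ℕ} {A : Set (Fin d → ℝ)}
    (hb : Bornology.IsBounded A) (hc : Convex ℝ A)
    {h r : ℝ} (hh : 0 < h) (hr : 2 * h < r) {x : Fin d → ℝ}
    (hx : Metric.ball x r ⊆ A) :
    (volume (Metric.cthickening h (frontier A))).toReal / (volume A).toReal
      ≤ (1 + h / r) ^ d - (1 - 2 * h / r) ^ d := by
  have hr0 : 0 < r := lt_trans (by positivity) hr
  set s : ℝ := h / r with hs_def
  have hs : 0 < s := div_pos hh hr0
  have h2s : 2 * s < 1 := by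
    rw [hs_def]
    rw [mul_div_assoc'] at *
    exact (div_lt_one hr0).2 hr
  have h2s' : 0 < 1 - 2 * s := by linarith
  set K : Set (Fin d → ℝ) := closure A with hK_def
  have hKcomp : IsCompact K := hb.isCompact_closure
  have hKconv : Convex ℝ K := hc.closure
  have hxK : x ∈ K := subset_closure (hx (mem_ball_self hr0))
  have hxint : Metric.ball x r ⊆ interior A := interior_maximal hx isOpen_ball
  -- outer inclusion
  have hOut : Metric.cthickening h K ⊆ AffineMap.homothety x (1 + s) '' K := by
    rw [hKcomp.cthickening_eq_biUnion_closedBall hh.le]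
    rintro y hy
    simp only [mem_iUnion, Metric.mem_closedBall] at hy
    obtain ⟨a, haK, hya⟩ := hy
    refine ⟨(1 + s)⁻¹ • (y - x) + x, ?_, ?_⟩
    · -- convex combination
      have h1s : (0:ℝ) < 1 + s := by linarith
      have hpt : x + s⁻¹ • (y - a) ∈ K := by
        have : x + s⁻¹ • (y - a) ∈ Metric.closedBall x r := by
          rw [Metric.mem_closedBall, dist_eq_norm]
          have : x + s⁻¹ • (y - a) - x = s⁻¹ • (y - a) := by abel
          rw [this, norm_smul, Real.norm_eq_abs, abs_of_pos (inv_pos.2 hs)]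
          have hd : dist y a = ‖y - a‖ := dist_eq_norm y a
          calc s⁻¹ * ‖y - a‖ ≤ s⁻¹ * h := by
                have := hya; rw [hd] at this
                exact mul_le_mul_of_nonneg_left this (inv_pos.2 hs).le
            _ = r := by rw [hs_def]; field_simp
        have : Metric.closedBall x r ⊆ K := by
          rw [← closure_ball x hr0.ne']
          exact closure_mono hx
        exact this ‹_›
      have hcomb : (1 + s)⁻¹ • (y - x) + x
          = (1 + s)⁻¹ • a + (s / (1 + s)) • (x + s⁻¹ • (y - a)) := by
        have hya' : y = a + (y - a) := by abel
        match_scalars <;> (field_simp; try ring)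
      rw [hcomb]
      exact hKconv haK hpt (by positivity) (by positivity) (by field_simp)
    · rw [AffineMap.homothety_apply]
      simp only [vsub_eq_sub, vadd_eq_add]
      have h1s : (1 + s) ≠ 0 := by positivity
      match_scalars <;> (field_simp; try ring)
  -- inner exclusion
  have hInn : ∀ w ∈ K, ∀ z ∈ frontier A,
      2 * h ≤ dist (AffineMap.homothety x (1 - 2 * s) w) z := by
    intro w hw z hz
    by_contra hlt
    push_neg at hlt
    set y := AffineMap.homothety x (1 - 2 * s) w with hy_def
    have hq : x + (2 * s)⁻¹ • (z - y) ∈ interior A := by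
      apply hxint
      rw [Metric.mem_ball, dist_eq_norm]
      have : x + (2 * s)⁻¹ • (z - y) - x = (2 * s)⁻¹ • (z - y) := by abel
      rw [this, norm_smul, Real.norm_eq_abs, abs_of_pos (by positivity : (0:ℝ) < (2*s)⁻¹)]
      have hzy : ‖z - y‖ < 2 * h := by rw [← dist_eq_norm, dist_comm]; exact hlt
      calc (2 * s)⁻¹ * ‖z - y‖ < (2 * s)⁻¹ * (2 * h) := by
            exact mul_lt_mul_of_pos_left hzy (by positivity)
        _ = r := by rw [hs_def]; field_simp
    have hzint : z ∈ interior A := by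
      have hcomb : z = (2 * s) • (x + (2 * s)⁻¹ • (z - y)) + (1 - 2 * s) • w := by
        rw [hy_def, AffineMap.homothety_apply]
        simp only [vsub_eq_sub, vadd_eq_add]
        match_scalars <;> (field_simp; try ring)
      rw [hcomb]
      exact hc.combo_interior_closure_mem_interior hq hw (by positivity) h2s'.le (by ring)
    exact hz.2 hzint
  have hdisj : Metric.cthickening h (frontier A)
      ⊆ (AffineMap.homothety x (1 + s) '' K) \ (AffineMap.homothety x (1 - 2 * s) '' K) := by
    intro y hy
    constructor
    · apply hOut
      exact Metric.cthickening_subset_of_subset h frontier_subset_closure hy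
    · rintro ⟨w, hwK, rfl⟩
      rw [Metric.mem_cthickening_iff] at hy
      have hge : ENNReal.ofReal (2 * h) ≤ EMetric.infEdist (AffineMap.homothety x (1 - 2*s) w) (frontier A) := by
        apply EMetric.le_infEdist.2
        intro z hz
        rw [edist_dist]
        exact ENNReal.ofReal_le_ofReal (hInn w hwK z hz)
      have : ENNReal.ofReal h < ENNReal.ofReal (2 * h) :=
        ENNReal.ofReal_lt_ofReal_iff (by positivity) |>.2 (by linarith)
      exact absurd hy (not_le.2 (lt_of_lt_of_le this hge))
  -- measure computations
  have hfr : volume (frontier A) = 0 := hc.addHaar_frontier volume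
  have hKA : volume K = volume A := by
    apply le_antisymm
    · calc volume K ≤ volume (A ∪ frontier A) := by
            apply measure_mono
            intro z hz
            by_cases hzA : z ∈ interior A
            · exact Or.inl (interior_subset hzA)
            · exact Or.inr ⟨hz, hzA⟩
        _ ≤ volume A + volume (frontier A) := measure_union_le _ _
        _ = volume A := by rw [hfr, add_zero]
    · exact measure_mono subset_closure
  have hVfin : volume A ≠ ⊤ := hb.measure_lt_top.ne
  have hVpos : 0 < (volume A).toReal := by
    refine ENNReal.toReal_pos ?_ hVfin
    exact (lt_of_lt_of_le (measure_ball_pos volume x hr0) (measure_mono hx)).ne'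
  set a : ℝ := (1 + s) ^ d with ha_def
  set b : ℝ := (1 - 2 * s) ^ d with hb_def
  have hb0 : 0 ≤ b := by positivity
  have hba : b ≤ a := pow_le_pow_left₀ h2s'.le (by linarith) d
  have hOutVol : volume (AffineMap.homothety x (1 + s) '' K)
      = ENNReal.ofReal a * volume A := by
    rw [Measure.addHaar_image_homothety, hKA, Module.finrank_fin_fun,
      abs_of_pos (by positivity)]
  have hInnVol : volume (AffineMap.homothety x (1 - 2 * s) '' K)
      = ENNReal.ofReal b * volume A := by
    rw [Measure.addHaar_image_homothety, hKA, Module.finrank_fin_fun,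
      abs_of_pos (by positivity)]
  have hInnK : AffineMap.homothety x (1 - 2 * s) '' K ⊆ K := by
    rintro _ ⟨w, hw, rfl⟩
    have hcomb : AffineMap.homothety x (1 - 2 * s) w
        = (1 - 2 * s) • w + (2 * s) • x := by
      rw [AffineMap.homothety_apply]
      simp only [vsub_eq_sub, vadd_eq_add]
      module
    rw [hcomb]
    exact hKconv hw hxK h2s'.le (by positivity) (by ring)
  have hsub : AffineMap.homothety x (1 - 2 * s) '' K
      ⊆ AffineMap.homothety x (1 + s) '' K :=
    hInnK.trans ((Metric.self_subset_cthickening K).trans hOut)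
  have hInnMeas : MeasurableSet (AffineMap.homothety x (1 - 2 * s) '' K) :=
    (hKcomp.image (AffineMap.homothety_continuous x (1 - 2 * s))).measurableSet
  have hInnFin : volume (AffineMap.homothety x (1 - 2 * s) '' K) ≠ ⊤ := by
    rw [hInnVol]
    exact ENNReal.mul_ne_top ENNReal.ofReal_ne_top hVfin
  have hle1 : volume (Metric.cthickening h (frontier A))
      ≤ ENNReal.ofReal (a - b) * volume A := by
    calc volume (Metric.cthickening h (frontier A))
        ≤ volume ((AffineMap.homothety x (1 + s) '' K)
            \ (AffineMap.homothety x (1 - 2 * s) '' K)) := measure_mono hdisj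
      _ = volume (AffineMap.homothety x (1 + s) '' K)
            - volume (AffineMap.homothety x (1 - 2 * s) '' K) :=
          measure_diff hsub hInnMeas.nullMeasurableSet hInnFin
      _ = ENNReal.ofReal a * volume A - ENNReal.ofReal b * volume A := by
          rw [hOutVol, hInnVol]
      _ = (ENNReal.ofReal a - ENNReal.ofReal b) * volume A := by
          rw [ENNReal.sub_mul fun _ _ => hVfin]
      _ = ENNReal.ofReal (a - b) * volume A := by
          rw [ENNReal.ofReal_sub a hb0]
  rw [div_le_iff₀ hVpos]
  calc (volume (Metric.cthickening h (frontier A))).toReal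
      ≤ (ENNReal.ofReal (a - b) * volume A).toReal := by
        apply ENNReal.toReal_mono (ENNReal.mul_ne_top ENNReal.ofReal_ne_top hVfin) hle1
    _ = (a - b) * (volume A).toReal := by
        rw [ENNReal.toReal_mul, ENNReal.toReal_ofReal (by linarith)]
    _ = ((1 + h / r) ^ d - (1 - 2 * h / r) ^ d) * (volume A).toReal := by
        rw [ha_def, hb_def, hs_def]; ring_nf

/-- along a convex averaging sequence `{A_n}`, the `h`-neighborhood
of the topological boundary is negligible in measure: `ℓ(∂A_n^h)/ℓ(A_n) → 0`,
where `∂A^h = {x : dist(x, ∂A) ≤ h}` is the closed `h`-thickening of `∂A`. -/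
theorem volume_ratio_boundary_tendsto_zero {d : ℕ} (hd : 0 < d)
    (A : ℕ → Set (Fin d → ℝ))
    (hbdd : ∀ n, Bornology.IsBounded (A n))
    (hconv : ∀ n, Convex ℝ (A n))
    (hmeas : ∀ n, MeasurableSet (A n))
    (hmono : ∀ n, A n ⊆ A (n + 1))
    (hinr : ∀ r : ℝ, 0 < r → ∃ N : ℕ, ∀ n ≥ N, ∃ x, Metric.ball x r ⊆ A n)
    (h : ℝ) (hh : 0 < h) :
    Tendsto
      (fun n =>
        (volume (Metric.cthickening h (frontier (A n)))).toReal /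
          (volume (A n)).toReal)
      atTop (nhds 0) := by
  rw [Metric.tendsto_atTop]
  intro ε hε
  set F : ℝ → ℝ := fun t => (1 + h * t) ^ d - (1 - 2 * h * t) ^ d with hF_def
  have hFcont : ContinuousAt F 0 := by fun_prop
  have hF0 : F 0 = 0 := by simp [hF_def]
  obtain ⟨δ, hδ, hδ'⟩ := Metric.continuousAt_iff.1 hFcont ε hε
  set r : ℝ := max (2 * h + 1) (2 / δ) with hr_def
  have hr2h : 2 * h < r := lt_of_lt_of_le (by linarith) (le_max_left _ _)
  have hr0 : 0 < r := lt_trans (by positivity) hr2h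
  have hrδ : dist (1 / r) 0 < δ := by
    rw [dist_zero_right, Real.norm_eq_abs, abs_of_pos (by positivity)]
    have h2 : 2 / δ ≤ r := le_max_right _ _
    have h1 : 1 / r ≤ δ / 2 := by
      calc 1 / r ≤ 1 / (2 / δ) := one_div_le_one_div_of_le (by positivity) h2
        _ = δ / 2 := one_div_div 2 δ
    linarith
  have hFrlt : F (1 / r) < ε := by
    have := hδ' hrδ
    rw [hF0, Real.dist_0_eq_abs] at this
    exact lt_of_le_of_lt (le_abs_self _) this
  obtain ⟨N, hN⟩ := hinr r hr0
  refine ⟨N, fun n hn => ?_⟩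
  obtain ⟨x, hxball⟩ := hN n hn
  have hkey := key_bound (hbdd n) (hconv n) hh hr2h hxball
  have hFr : (1 + h / r) ^ d - (1 - 2 * h / r) ^ d = F (1 / r) := by
    simp only [hF_def, mul_one_div]
  rw [dist_zero_right, Real.norm_eq_abs,
    abs_of_nonneg (div_nonneg ENNReal.toReal_nonneg ENNReal.toReal_nonneg)]
  calc (volume (Metric.cthickening h (frontier (A n)))).toReal / (volume (A n)).toReal
      ≤ (1 + h / r) ^ d - (1 - 2 * h / r) ^ d := hkey
    _ = F (1 / r) := hFr
    _ < ε := hFrlt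
end
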